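/- Under the good event (max_j (2/n)|ε^⊤X^{(j)}| ≤ λ₀) and λ ≥ 2λ₀, the LASSO error v = β̂ − β⁰ satisfies the cone condition ‖v_{S₀^c}‖₁ ≤ 3‖v_{S₀}‖₁, where S₀ = supp(β⁰). -/

import Mathlib

open Finset Matrix

open Classical in
/-- Cone condition for the LASSO error: on the good event and for `λ ≥ 2λ₀ > 0`,
the error `v = β̂ - β⁰` satisfies `‖v_{S₀ᶜ}‖₁ ≤ 3‖v_{S₀}‖₁` with `S₀ = supp(β⁰)`. -/
theorem lasso_cone_condition
    (n d : ℕ) (hn : 0 < n)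
    (X : Matrix (Fin n) (Fin d) ℝ) (β0 βhat : Fin d → ℝ) (ε Y : Fin n → ℝ)
    (lam lam0 : ℝ) (hlam_pos : 0 < lam)
    (hY : Y = X.mulVec β0 + ε)
    (hmin : ∀ β : Fin d → ℝ,
      (1 / (n : ℝ)) * ∑ i, (Y i - X.mulVec βhat i) ^ 2 + lam * ∑ j, |βhat j|
        ≤ (1 / (n : ℝ)) * ∑ i, (Y i - X.mulVec β i) ^ 2 + lam * ∑ j, |β j|)
    (hgood : ∀ j : Fin d, (2 / (n : ℝ)) * |∑ i, ε i * X i j| ≤ lam0)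
    (hlam : lam ≥ 2 * lam0) :
    ∑ j ∈ Finset.univ.filter (fun j => β0 j = 0), |βhat j - β0 j|
      ≤ 3 * ∑ j ∈ Finset.univ.filter (fun j => β0 j ≠ 0), |βhat j - β0 j| := by
  have hn' : (0:ℝ) < n := by exact_mod_cast hn
  set v : Fin d → ℝ := fun j => βhat j - β0 j with hvdef
  have hveq : v = βhat - β0 := rfl
  have hmv : X.mulVec v = X.mulVec βhat - X.mulVec β0 := by
    rw [hveq, Matrix.mulVec_sub]
  have hres : ∀ i, Y i - X.mulVec βhat i = ε i - X.mulVec v i := by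
    intro i
    have := congrFun hmv i
    simp only [Pi.sub_apply] at this
    rw [hY]
    simp only [Pi.add_apply]
    linarith
  have hε : ∀ i, Y i - X.mulVec β0 i = ε i := by
    intro i; rw [hY]; simp
  have key := hmin β0
  rw [show (∑ i, (Y i - X.mulVec βhat i)^2) = ∑ i, (ε i - X.mulVec v i)^2 from
        Finset.sum_congr rfl (fun i _ => by rw [hres i])] at key
  rw [show (∑ i, (Y i - X.mulVec β0 i)^2) = ∑ i, (ε i)^2 from
        Finset.sum_congr rfl (fun i _ => by rw [hε i])] at key
  set T := ∑ i, ε i * X.mulVec v i with hTdef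
  set Q := ∑ i, (X.mulVec v i)^2 with hQdef
  set E := ∑ i, (ε i)^2 with hEdef
  have hexp : ∑ i, (ε i - X.mulVec v i)^2 = E - 2 * T + Q := by
    rw [hEdef, hTdef, hQdef, Finset.mul_sum, ← Finset.sum_sub_distrib,
      ← Finset.sum_add_distrib]
    exact Finset.sum_congr rfl fun i _ => by ring
  rw [hexp] at key
  -- basic inequality
  have hbasic : (1/(n:ℝ)) * Q ≤ (2/(n:ℝ)) * T
      + lam * (∑ j, |β0 j| - ∑ j, |βhat j|) := by
    have h2 : (2/(n:ℝ)) * T = (1/(n:ℝ)) * (2*T) := by ring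
    have h3 : (1/(n:ℝ)) * (E - 2*T + Q)
        = (1/(n:ℝ))*E - (1/(n:ℝ))*(2*T) + (1/(n:ℝ))*Q := by ring
    have h4 : lam * (∑ j, |β0 j| - ∑ j, |βhat j|)
        = lam * ∑ j, |β0 j| - lam * ∑ j, |βhat j| := by ring
    linarith [key]
  -- Fubini for the cross term
  have hTsum : T = ∑ j, v j * (∑ i, ε i * X i j) := by
    rw [hTdef]
    simp only [Matrix.mulVec, dotProduct, Finset.mul_sum]
    rw [Finset.sum_comm]
    exact Finset.sum_congr rfl fun j _ =>
      Finset.sum_congr rfl fun i _ => by ring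
  -- bound the cross term
  have hTbound : (2/(n:ℝ)) * T ≤ (lam/2) * ∑ j, |v j| := by
    have h1 : (2/(n:ℝ)) * T = ∑ j, (2/(n:ℝ)) * (v j * (∑ i, ε i * X i j)) := by
      rw [hTsum, Finset.mul_sum]
    rw [h1, Finset.mul_sum]
    apply Finset.sum_le_sum
    intro j _
    have habs : (2/(n:ℝ)) * (v j * (∑ i, ε i * X i j))
        ≤ |v j| * ((2/(n:ℝ)) * |∑ i, ε i * X i j|) := by
      calc (2/(n:ℝ)) * (v j * (∑ i, ε i * X i j))
          ≤ |(2/(n:ℝ)) * (v j * (∑ i, ε i * X i j))| := le_abs_self _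
        _ = |v j| * ((2/(n:ℝ)) * |∑ i, ε i * X i j|) := by
            rw [abs_mul, abs_mul, abs_of_nonneg (by positivity : (0:ℝ) ≤ 2/(n:ℝ))]
            ring
    have h3 : |v j| * ((2/(n:ℝ)) * |∑ i, ε i * X i j|) ≤ |v j| * lam0 :=
      mul_le_mul_of_nonneg_left (hgood j) (abs_nonneg _)
    have h4 : |v j| * lam0 ≤ |v j| * (lam/2) :=
      mul_le_mul_of_nonneg_left (by linarith) (abs_nonneg _)
    calc (2/(n:ℝ)) * (v j * (∑ i, ε i * X i j))
        ≤ |v j| * (lam/2) := by linarith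
      _ = lam/2 * |v j| := by ring
  -- the two pieces of the ℓ¹ norm
  set A := ∑ j ∈ Finset.univ.filter (fun j => β0 j = 0), |v j| with hAdef
  set B := ∑ j ∈ Finset.univ.filter (fun j => β0 j ≠ 0), |v j| with hBdef
  have hAB : ∑ j, |v j| = A + B := by
    rw [hAdef, hBdef]
    exact (Finset.sum_filter_add_sum_filter_not Finset.univ (fun j => β0 j = 0) _).symm
  -- penalty bound
  have hpen : ∑ j, |β0 j| - ∑ j, |βhat j| ≤ B - A := by
    have h0 : ∑ j, (|β0 j| - |βhat j|) = ∑ j, |β0 j| - ∑ j, |βhat j| :=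
      Finset.sum_sub_distrib _ _
    rw [← h0,
      ← Finset.sum_filter_add_sum_filter_not Finset.univ (fun j => β0 j = 0)
        (fun j => |β0 j| - |βhat j|)]
    have hA' : ∑ j ∈ Finset.univ.filter (fun j => β0 j = 0), (|β0 j| - |βhat j|)
        = -A := by
      rw [hAdef, ← Finset.sum_neg_distrib]
      apply Finset.sum_congr rfl
      intro j hj
      have hj0 : β0 j = 0 := (Finset.mem_filter.mp hj).2
      simp [hvdef, hj0]
    have hB' : ∑ j ∈ Finset.univ.filter (fun j => ¬ β0 j = 0), (|β0 j| - |βhat j|)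
        ≤ B := by
      rw [hBdef]
      apply Finset.sum_le_sum
      intro j _
      calc |β0 j| - |βhat j| ≤ |β0 j - βhat j| := abs_sub_abs_le_abs_sub _ _
        _ = |v j| := by rw [hvdef]; simp [abs_sub_comm]
    linarith
  -- combine everything
  have hQ0 : 0 ≤ (1/(n:ℝ)) * Q := by
    have hq : 0 ≤ Q := Finset.sum_nonneg fun i _ => sq_nonneg _
    positivity
  have hchain : 0 ≤ (lam/2) * (A + B) + lam * (B - A) := by
    have h5 : lam * (∑ j, |β0 j| - ∑ j, |βhat j|) ≤ lam * (B - A) :=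
      mul_le_mul_of_nonneg_left hpen hlam_pos.le
    have h6 : (2/(n:ℝ)) * T ≤ (lam/2) * (A + B) := by rw [← hAB]; exact hTbound
    linarith
  have hfin : lam * A ≤ lam * (3 * B) := by nlinarith [hchain]
  have hfinal : A ≤ 3 * B := (mul_le_mul_iff_right₀ hlam_pos).mp hfin
  calc ∑ j ∈ Finset.univ.filter (fun j => β0 j = 0), |βhat j - β0 j| = A := by
        rw [hAdef]
    _ ≤ 3 * B := hfinal
    _ = 3 * ∑ j ∈ Finset.univ.filter (fun j => β0 j ≠ 0), |βhat j - β0 j| := by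
        rw [hBdef]
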